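/- Let G be a real Lie group with Cartan decomposition (K,𝔭), meaning K is a compact subgroup, 𝔭 ⊆ Lie(G) is Ad(K)-stable, and (k,X) ↦ k·exp(X) is a diffeomorphism K × 𝔭 → G. Then K is a maximal compact subgroup of G. -/

import Mathlib

/-- If a (Lie) topological group `G` admits a Cartan decomposition `(K,𝔭)`:
`K` a compact subgroup, `𝔭 ⊆ Lie(G)` an `Ad(K)`-stable subspace, and `(k,X) ↦ k·exp X` a
homeomorphism `K × 𝔭 ≃ G` (with `exp` continuous and `exp(nX) = (exp X)ⁿ`), then `K` is a
maximal compact subgroup of `G`. -/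
theorem stmt_4 {E : Type*} [NormedAddCommGroup E] [NormedSpace ℝ E]
    {G : Type*} [Group G] [TopologicalSpace G] [IsTopologicalGroup G]
    (𝔭 : Submodule ℝ E) (expm : E → G) (hexpcont : Continuous expm)
    (hpow : ∀ (X : E) (n : ℕ), expm ((n : ℝ) • X) = expm X ^ n)
    (K : Subgroup G) (hKcpt : IsCompact (K : Set G))
    (hAd : ∀ k ∈ K, ∀ X ∈ 𝔭, ∃ Y ∈ 𝔭, k * expm X * k⁻¹ = expm Y)
    (Φ : (K × 𝔭) ≃ₜ G) (hΦ : ∀ (k : K) (X : 𝔭), Φ (k, X) = (k : G) * expm (X : E)) :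
    ∀ L : Subgroup G, IsCompact (L : Set G) → K ≤ L → L = K := by
  intro L hL hKL
  refine le_antisymm (fun g hg => ?_) hKL
  obtain ⟨⟨k, X⟩, hkX⟩ : ∃ p, Φ p = g := ⟨Φ.symm g, Φ.apply_symm_apply g⟩
  rw [hΦ] at hkX
  have hexpL : expm (X : E) ∈ L := by
    have h1 : (k : G)⁻¹ * g ∈ L := L.mul_mem (L.inv_mem (hKL k.2)) hg
    rwa [← hkX, ← mul_assoc, inv_mul_cancel, one_mul] at h1
  have hnL : ∀ n : ℕ, expm ((n : ℝ) • (X : E)) ∈ L := fun n => by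
    rw [hpow]; exact pow_mem hexpL n
  set S : Set E := (fun p : K × 𝔭 => (p.2 : E)) '' (Φ.symm '' (L : Set G)) with hS
  have hTcpt : IsCompact S :=
    (hL.image Φ.symm.continuous).image (continuous_subtype_val.comp continuous_snd)
  have hmem : ∀ n : ℕ, (n : ℝ) • (X : E) ∈ S := fun n => by
    refine ⟨(1, ⟨(n : ℝ) • (X : E), 𝔭.smul_mem _ X.2⟩),
      ⟨expm ((n : ℝ) • (X : E)), hnL n, ?_⟩, rfl⟩
    refine Φ.toEquiv.symm_apply_eq.mpr ?_
    rw [Homeomorph.coe_toEquiv, hΦ]; simp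
  obtain ⟨C, hC⟩ := (isBounded_iff_forall_norm_le).mp hTcpt.isBounded
  have hX0 : (X : E) = 0 := by
    by_contra hX
    have hpos : 0 < ‖(X : E)‖ := norm_pos_iff.mpr hX
    obtain ⟨n, hn⟩ := exists_nat_gt (C / ‖(X : E)‖)
    have hle := hC _ (hmem n)
    rw [norm_smul, Real.norm_natCast] at hle
    have : C / ‖(X : E)‖ < n := hn
    nlinarith [(div_lt_iff₀ hpos).mp this]
  have hone : expm (X : E) = 1 := by
    simpa [hX0] using hpow (X : E) 0
  rw [← hkX, hone, mul_one]
  exact k.2
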